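/- Let h > 0 and suppose M₁, M₂ : ℝ × ℝ → ℝ both solve the Bürgers-type equation ∂M/∂t + (1/2)(∂M/∂x)² - (h/2)∂²M/∂x² = 0. Then for any constants μ₁, μ₂ ∈ ℝ, the function M = -h log(exp(-(M₁+μ₁)/h) + exp(-(M₂+μ₂)/h)) also solves this equation. -/

import Mathlib

theorem stmt_2 (h : ℝ) (hh : 0 < h) (M₁ M₂ : ℝ → ℝ → ℝ)
    (hx₁ : ∀ t, ContDiff ℝ 2 (fun x => M₁ x t))
    (ht₁ : ∀ x, Differentiable ℝ (M₁ x))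
    (hx₂ : ∀ t, ContDiff ℝ 2 (fun x => M₂ x t))
    (ht₂ : ∀ x, Differentiable ℝ (M₂ x))
    (hb₁ : ∀ x t, deriv (M₁ x) t + (1 / 2) * (deriv (fun y => M₁ y t) x) ^ 2
      - (h / 2) * deriv (deriv (fun y => M₁ y t)) x = 0)
    (hb₂ : ∀ x t, deriv (M₂ x) t + (1 / 2) * (deriv (fun y => M₂ y t) x) ^ 2
      - (h / 2) * deriv (deriv (fun y => M₂ y t)) x = 0)
    (μ₁ μ₂ : ℝ) (M : ℝ → ℝ → ℝ)
    (hM : ∀ x t, M x t =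
      -h * Real.log (Real.exp (-(M₁ x t + μ₁) / h) + Real.exp (-(M₂ x t + μ₂) / h))) :
    ∀ x t, deriv (M x) t + (1 / 2) * (deriv (fun y => M y t) x) ^ 2
      - (h / 2) * deriv (deriv (fun y => M y t)) x = 0 := by
  have hne : h ≠ 0 := ne_of_gt hh
  intro x t
  set g₁ : ℝ → ℝ → ℝ := fun z s => Real.exp (-(M₁ z s + μ₁) / h) with hg₁def
  set g₂ : ℝ → ℝ → ℝ := fun z s => Real.exp (-(M₂ z s + μ₂) / h) with hg₂def
  have vpos : ∀ z s, 0 < g₁ z s + g₂ z s := fun z s => by positivity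
  -- x-derivatives of M₁, M₂ at each point (for fixed t)
  have hdiff1 : Differentiable ℝ (fun y => M₁ y t) := (hx₁ t).differentiable (by norm_num)
  have hdiff2 : Differentiable ℝ (fun y => M₂ y t) := (hx₂ t).differentiable (by norm_num)
  have hd1 : ∀ z, HasDerivAt (fun y => M₁ y t) (deriv (fun y => M₁ y t) z) z :=
    fun z => (hdiff1 z).hasDerivAt
  have hd2 : ∀ z, HasDerivAt (fun y => M₂ y t) (deriv (fun y => M₂ y t) z) z :=
    fun z => (hdiff2 z).hasDerivAt
  -- differentiability of the first x-derivatives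
  have hder1 : Differentiable ℝ (deriv (fun y => M₁ y t)) := by
    have h2 : ContDiff ℝ ((1:ℕ∞)+1) (fun y => M₁ y t) := by convert hx₁ t using 2; norm_num
    exact (contDiff_succ_iff_deriv.mp h2).2.2.differentiable (by norm_num)
  have hder2 : Differentiable ℝ (deriv (fun y => M₂ y t)) := by
    have h2 : ContDiff ℝ ((1:ℕ∞)+1) (fun y => M₂ y t) := by convert hx₂ t using 2; norm_num
    exact (contDiff_succ_iff_deriv.mp h2).2.2.differentiable (by norm_num)
  -- derivative of g₁, g₂ in x
  have hg1 : ∀ z, HasDerivAt (fun y => g₁ y t)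
      (g₁ z t * (-(deriv (fun y => M₁ y t) z) / h)) z := by
    intro z
    have := (((hd1 z).add_const μ₁).neg.div_const h).exp
    simpa [hg₁def, neg_div] using this
  have hg2 : ∀ z, HasDerivAt (fun y => g₂ y t)
      (g₂ z t * (-(deriv (fun y => M₂ y t) z) / h)) z := by
    intro z
    have := (((hd2 z).add_const μ₂).neg.div_const h).exp
    simpa [hg₂def, neg_div] using this
  -- derivative of v = g₁ + g₂ in x
  have hv : ∀ z, HasDerivAt (fun y => g₁ y t + g₂ y t)
      (g₁ z t * (-(deriv (fun y => M₁ y t) z) / h)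
        + g₂ z t * (-(deriv (fun y => M₂ y t) z) / h)) z :=
    fun z => (hg1 z).add (hg2 z)
  -- M as a function of x
  have hMfun : (fun y => M y t) = fun y => -h * Real.log (g₁ y t + g₂ y t) :=
    funext fun y => hM y t
  have hMx : ∀ z, HasDerivAt (fun y => M y t)
      (-h * ((g₁ z t * (-(deriv (fun y => M₁ y t) z) / h)
        + g₂ z t * (-(deriv (fun y => M₂ y t) z) / h)) / (g₁ z t + g₂ z t))) z := by
    intro z
    rw [hMfun]
    exact ((hv z).log (vpos z t).ne').const_mul (-h)
  have hderMx : deriv (fun y => M y t) = fun z =>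
      -h * ((g₁ z t * (-(deriv (fun y => M₁ y t) z) / h)
        + g₂ z t * (-(deriv (fun y => M₂ y t) z) / h)) / (g₁ z t + g₂ z t)) :=
    funext fun z => (hMx z).deriv
  -- second x-derivative at x
  have hm1 : HasDerivAt (deriv (fun y => M₁ y t)) (deriv (deriv (fun y => M₁ y t)) x) x :=
    (hder1 x).hasDerivAt
  have hm2 : HasDerivAt (deriv (fun y => M₂ y t)) (deriv (deriv (fun y => M₂ y t)) x) x :=
    (hder2 x).hasDerivAt
  set b₁ := deriv (fun y => M₁ y t) x with hb₁x
  set b₂ := deriv (fun y => M₂ y t) x with hb₂x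
  set c₁ := deriv (deriv (fun y => M₁ y t)) x with hc₁x
  set c₂ := deriv (deriv (fun y => M₂ y t)) x with hc₂x
  set G₁ := g₁ x t with hG₁
  set G₂ := g₂ x t with hG₂
  -- derivative of vx := g₁*(-m₁/h) + g₂*(-m₂/h) at x
  have hvx : HasDerivAt (fun z => g₁ z t * (-(deriv (fun y => M₁ y t) z) / h)
      + g₂ z t * (-(deriv (fun y => M₂ y t) z) / h))
      ((G₁ * (-b₁ / h)) * (-b₁ / h) + G₁ * (-c₁ / h)
        + ((G₂ * (-b₂ / h)) * (-b₂ / h) + G₂ * (-c₂ / h))) x := by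
    exact ((hg1 x).mul (hm1.neg.div_const h)).add ((hg2 x).mul (hm2.neg.div_const h))
  have hMxx : HasDerivAt (deriv (fun y => M y t))
      (-h * ((((G₁ * (-b₁ / h)) * (-b₁ / h) + G₁ * (-c₁ / h)
        + ((G₂ * (-b₂ / h)) * (-b₂ / h) + G₂ * (-c₂ / h))) * (G₁ + G₂)
        - (G₁ * (-b₁ / h) + G₂ * (-b₂ / h))
          * (G₁ * (-b₁ / h) + G₂ * (-b₂ / h))) / (G₁ + G₂) ^ 2)) x := by
    rw [hderMx]
    exact (hvx.div (hv x) (vpos x t).ne').const_mul (-h)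
  -- t-derivative at (x, t)
  have ht1 : HasDerivAt (M₁ x) (deriv (M₁ x) t) t := ((ht₁ x) t).hasDerivAt
  have ht2 : HasDerivAt (M₂ x) (deriv (M₂ x) t) t := ((ht₂ x) t).hasDerivAt
  have hg1t : HasDerivAt (fun s => g₁ x s) (G₁ * (-(deriv (M₁ x) t) / h)) t := by
    have := ((ht1.add_const μ₁).neg.div_const h).exp
    simpa [hg₁def, hG₁, neg_div] using this
  have hg2t : HasDerivAt (fun s => g₂ x s) (G₂ * (-(deriv (M₂ x) t) / h)) t := by
    have := ((ht2.add_const μ₂).neg.div_const h).exp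
    simpa [hg₂def, hG₂, neg_div] using this
  have hMt : HasDerivAt (M x)
      (-h * ((G₁ * (-(deriv (M₁ x) t) / h) + G₂ * (-(deriv (M₂ x) t) / h)) / (G₁ + G₂))) t := by
    have hMfun' : M x = fun s => -h * Real.log (g₁ x s + g₂ x s) := funext fun s => hM x s
    rw [hMfun']
    exact (((hg1t.add hg2t).log (vpos x t).ne')).const_mul (-h)
  -- assemble
  set a₁ := deriv (M₁ x) t with ha₁
  set a₂ := deriv (M₂ x) t with ha₂
  have e1 : deriv (M x) t = -h * ((G₁ * (-a₁ / h) + G₂ * (-a₂ / h)) / (G₁ + G₂)) := hMt.deriv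
  have e2 : deriv (fun y => M y t) x
      = -h * ((G₁ * (-b₁ / h) + G₂ * (-b₂ / h)) / (G₁ + G₂)) := (hMx x).deriv
  have e3 : deriv (deriv (fun y => M y t)) x
      = -h * ((((G₁ * (-b₁ / h)) * (-b₁ / h) + G₁ * (-c₁ / h)
        + ((G₂ * (-b₂ / h)) * (-b₂ / h) + G₂ * (-c₂ / h))) * (G₁ + G₂)
        - (G₁ * (-b₁ / h) + G₂ * (-b₂ / h))
          * (G₁ * (-b₁ / h) + G₂ * (-b₂ / h))) / (G₁ + G₂) ^ 2) := hMxx.deriv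
  rw [e1, e2, e3]
  have eq1 : a₁ = (h / 2) * c₁ - (1 / 2) * b₁ ^ 2 := by
    have := hb₁ x t; rw [← ha₁, ← hb₁x, ← hc₁x] at this; linarith
  have eq2 : a₂ = (h / 2) * c₂ - (1 / 2) * b₂ ^ 2 := by
    have := hb₂ x t; rw [← ha₂, ← hb₂x, ← hc₂x] at this; linarith
  rw [eq1, eq2]
  have hVne : G₁ + G₂ ≠ 0 := (vpos x t).ne'
  field_simp
  ring
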